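/- (Theorem 4.1, main claim.) Let (D1, M) be a consistent periodic first-derivative SBP operator (M symmetric positive definite and diagonal, M·D1 + D1ᵀ·M = 0, D1·𝟙 = 0) and D2 a consistent periodic second-derivative SBP operator with the same diagonal mass matrix M (M·D2 = −A2, A2 symmetric positive semidefinite, D2·𝟙 = 0). Let η, u : ℝ → ℝ^m be differentiable and satisfy the split-form BBM-BBM semidiscretization ∂ₜη = −(I − D2)⁻¹·D1·(u + η∘u), ∂ₜu = −(I − D2)⁻¹·(D1·η + u∘(D1·u)) for all t. Then the discrete quadratic invariant 𝓘(η(t), u(t)) = u(t)ᵀ·M·(I − D2)·η(t) is constant in t. -/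

import Mathlib

open Matrix

section Aux

variable {m : ℕ}

private lemma transp_dot (C : Matrix (Fin m) (Fin m) ℝ) (x y : Fin m → ℝ) :
    (C *ᵥ x) ⬝ᵥ y = x ⬝ᵥ (Cᵀ *ᵥ y) := by
  rw [dotProduct_comm, dotProduct_mulVec, mulVec_transpose, dotProduct_comm]

private lemma skew_quad {S : Matrix (Fin m) (Fin m) ℝ} (hS : Sᵀ = -S) (x : Fin m → ℝ) :
    x ⬝ᵥ (S *ᵥ x) = 0 := by
  have h := transp_dot S x x
  rw [hS, neg_mulVec, dotProduct_neg, dotProduct_comm] at h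
  linarith

private lemma diag_shift {M : Matrix (Fin m) (Fin m) ℝ} (hMdiag : M.IsDiag)
    (a b w : Fin m → ℝ) : (b * w) ⬝ᵥ (M *ᵥ a) = w ⬝ᵥ (M *ᵥ (a * b)) := by
  rw [← hMdiag.diagonal_diag]
  simp only [mulVec_diagonal, dotProduct]
  exact Finset.sum_congr rfl fun i _ => by simp [Pi.mul_apply]; ring

end Aux

/-- Theorem 4.1 (main claim): the split-form BBM-BBM semidiscretization
`∂ₜη = −(I − D2)⁻¹ D1 (u + η∘u)`, `∂ₜu = −(I − D2)⁻¹ (D1 η + u∘(D1 u))`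
with consistent periodic SBP operators `D1`, `D2` sharing a diagonal
symmetric positive definite mass matrix `M` conserves the discrete
quadratic invariant `𝓘(η, u) = uᵀ·M·(I − D2)·η`. -/
theorem bbm_bbm_split_form_conserves_quadratic_invariant
    (m : ℕ) (D1 D2 M A2 : Matrix (Fin m) (Fin m) ℝ)
    (hM : M.PosDef) (hMdiag : M.IsDiag)
    (hD1 : M * D1 + D1ᵀ * M = 0)
    (hD1cons : D1 *ᵥ (1 : Fin m → ℝ) = 0)
    (hA2 : A2.PosSemidef)
    (hD2 : M * D2 = -A2)
    (hD2cons : D2 *ᵥ (1 : Fin m → ℝ) = 0)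
    (η u : ℝ → Fin m → ℝ)
    (hη : ∀ t, HasDerivAt η (-((1 - D2)⁻¹ *ᵥ (D1 *ᵥ (u t + η t * u t)))) t)
    (hu : ∀ t, HasDerivAt u (-((1 - D2)⁻¹ *ᵥ (D1 *ᵥ η t + u t * (D1 *ᵥ u t)))) t) :
    ∀ t₁ t₂ : ℝ,
      u t₁ ⬝ᵥ ((M * (1 - D2)) *ᵥ η t₁) = u t₂ ⬝ᵥ ((M * (1 - D2)) *ᵥ η t₂) := by
  set B : Matrix (Fin m) (Fin m) ℝ := M * (1 - D2) with hBdef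
  -- basic algebra about the matrices
  have hB : B = M + A2 := by
    rw [hBdef, mul_sub, mul_one, hD2, sub_neg_eq_add]
  have hMA : (M + A2).PosDef := hM.add_posSemidef hA2
  have hMsym : Mᵀ = M := hM.isHermitian
  have hA2sym : A2ᵀ = A2 := hA2.isHermitian
  have hBsym : Bᵀ = B := by rw [hB, transpose_add, hMsym, hA2sym]
  have hdet : IsUnit (1 - D2).det := by
    have hdetB : B.det ≠ 0 := by
      rw [hB]; exact hMA.det_pos.ne'
    rw [hBdef, det_mul] at hdetB
    exact isUnit_iff_ne_zero.2 (right_ne_zero_of_mul hdetB)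
  have hinv : (1 - D2) * (1 - D2)⁻¹ = 1 := mul_nonsing_inv _ hdet
  have h1 : B * (1 - D2)⁻¹ = M := by
    rw [hBdef, mul_assoc, hinv, mul_one]
  have h2 : ((1 - D2)⁻¹)ᵀ * B = M := by
    have := congrArg transpose h1
    rw [transpose_mul, hBsym] at this
    rwa [hMsym] at this
  have hskew : (M * D1)ᵀ = -(M * D1) := by
    have h := eq_neg_of_add_eq_zero_left hD1
    rw [transpose_mul, hMsym]
    -- D1ᵀ * M = -(M * D1)
    have h2' : D1ᵀ * M = -(M * D1) := eq_neg_of_add_eq_zero_right hD1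
    exact h2'
  -- the derivative of the invariant vanishes
  have key : ∀ t, (-((1 - D2)⁻¹ *ᵥ (D1 *ᵥ η t + u t * (D1 *ᵥ u t)))) ⬝ᵥ (B *ᵥ η t)
      + u t ⬝ᵥ (B *ᵥ (-((1 - D2)⁻¹ *ᵥ (D1 *ᵥ (u t + η t * u t))))) = 0 := by
    intro t
    set a := η t
    set b := u t
    have T1 : ((1 - D2)⁻¹ *ᵥ (D1 *ᵥ a + b * (D1 *ᵥ b))) ⬝ᵥ (B *ᵥ a)
        = (D1 *ᵥ a + b * (D1 *ᵥ b)) ⬝ᵥ (M *ᵥ a) := by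
      rw [transp_dot, mulVec_mulVec, h2]
    have T2 : b ⬝ᵥ (B *ᵥ ((1 - D2)⁻¹ *ᵥ (D1 *ᵥ (b + a * b))))
        = b ⬝ᵥ ((M * D1) *ᵥ (b + a * b)) := by
      rw [mulVec_mulVec, h1, ← mulVec_mulVec]
    rw [mulVec_neg, dotProduct_neg, neg_dotProduct, T1, T2]
    rw [add_dotProduct, mulVec_add]
    rw [dotProduct_add]
    have e1 : (D1 *ᵥ a) ⬝ᵥ (M *ᵥ a) = 0 := by
      rw [transp_dot, mulVec_mulVec, eq_neg_of_add_eq_zero_right hD1, neg_mulVec,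
        dotProduct_neg, skew_quad hskew, neg_zero]
    have e2 : b ⬝ᵥ ((M * D1) *ᵥ b) = 0 := skew_quad hskew b
    have e3 : (b * (D1 *ᵥ b)) ⬝ᵥ (M *ᵥ a) = -(b ⬝ᵥ ((M * D1) *ᵥ (a * b))) := by
      rw [diag_shift hMdiag, transp_dot, mulVec_mulVec,
        eq_neg_of_add_eq_zero_right hD1, neg_mulVec, dotProduct_neg]
    rw [e1, e2, e3]
    ring
  -- conclude via vanishing derivative
  set f : ℝ → ℝ := fun t => u t ⬝ᵥ (B *ᵥ η t) with hf
  have hderiv : ∀ t, HasDerivAt f 0 t := by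
    intro t
    set u' := -((1 - D2)⁻¹ *ᵥ (D1 *ᵥ η t + u t * (D1 *ᵥ u t)))
    set η' := -((1 - D2)⁻¹ *ᵥ (D1 *ᵥ (u t + η t * u t)))
    have hui : ∀ i, HasDerivAt (fun s => u s i) (u' i) t := hasDerivAt_pi.1 (hu t)
    have hηi : ∀ i, HasDerivAt (fun s => η s i) (η' i) t := hasDerivAt_pi.1 (hη t)
    have hBη : ∀ i, HasDerivAt (fun s => (B *ᵥ η s) i) ((B *ᵥ η') i) t := by
      intro i
      simpa [mulVec, dotProduct] using
        HasDerivAt.fun_sum (fun j _ => (hηi j).const_mul (B i j))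
    have : HasDerivAt f (∑ i, (u' i * (B *ᵥ η t) i + u t i * (B *ᵥ η') i)) t := by
      simpa [hf, dotProduct] using
        HasDerivAt.fun_sum (fun i _ => (hui i).mul (hBη i))
    have hval : (∑ i, (u' i * (B *ᵥ η t) i + u t i * (B *ᵥ η') i)) = 0 := by
      rw [Finset.sum_add_distrib]
      exact key t
    rwa [hval] at this
  intro t₁ t₂
  exact is_const_of_deriv_eq_zero (fun t => (hderiv t).differentiableAt)
    (fun t => (hderiv t).deriv) t₁ t₂
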